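/- If X is a binomial random variable with n trials and success probability p, and p + t ≤ 1 with t > 0, then ℙ(X ≥ (p+t)n) ≤ exp(−n·D_KL(p+t ∥ p)), where D_KL(a ∥ b) = a·log(a/b) + (1−a)·log((1−a)/(1−b)) is the Kullback–Leibler divergence between Bernoulli distributions. -/
import Mathlib


/-- Kullback–Leibler divergence between Bernoulli distributions with parameters `a, b`. -/
noncomputable def klBernoulli (a b : ℝ) : ℝ :=
  a * Real.log (a / b) + (1 - a) * Real.log ((1 - a) / (1 - b))

/-- Chernoff bound for the binomial distribution: if `X ~ Binomial(n, p)` and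
`t > 0` with `p + t ≤ 1`, then `ℙ(X ≥ (p+t)·n) ≤ exp(−n·D_KL(p+t ∥ p))`. -/
theorem stmt7 (n : ℕ) (p t : ℝ) (hp0 : 0 < p) (hp1 : p < 1) (ht : 0 < t)
    (hpt : p + t ≤ 1) :
    ∑ k ∈ (Finset.range (n + 1)).filter (fun (k : ℕ) => (p + t) * n ≤ (k : ℝ)),
        (n.choose k : ℝ) * p ^ k * (1 - p) ^ (n - k) ≤
      Real.exp (-(n : ℝ) * klBernoulli (p + t) p) := by
  have h1p : 0 < 1 - p := by linarith
  rcases eq_or_lt_of_le hpt with h1 | hq1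
  · -- boundary case p + t = 1
    have hfilter : (Finset.range (n + 1)).filter (fun (k : ℕ) => (p + t) * n ≤ (k : ℝ)) = {n} := by
      rw [h1]
      ext k
      simp only [Finset.mem_filter, Finset.mem_range, Finset.mem_singleton, one_mul]
      constructor
      · rintro ⟨hk1, hk2⟩
        have : n ≤ k := by exact_mod_cast hk2
        omega
      · rintro rfl; exact ⟨by omega, le_refl _⟩
    rw [hfilter, h1]
    simp only [Finset.sum_singleton, Nat.choose_self, Nat.sub_self, pow_zero, Nat.cast_one,
      one_mul, mul_one]
    have hkl : klBernoulli 1 p = -Real.log p := by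
      simp [klBernoulli, one_div, Real.log_inv]
    rw [hkl, show -(n : ℝ) * -Real.log p = (n : ℝ) * Real.log p by ring,
      Real.exp_nat_mul, Real.exp_log hp0]
  · -- main case p + t < 1
    set q := p + t with hqdef
    have hq0 : 0 < q := by linarith
    have hpq : p < q := by linarith
    have h1q : 0 < 1 - q := by linarith
    have hr0 : 0 < q * (1 - p) / (p * (1 - q)) := by positivity
    set r := q * (1 - p) / (p * (1 - q)) with hrdef
    have hr1 : 1 ≤ r := by
      rw [hrdef, le_div_iff₀ (by positivity)]
      nlinarith
    have hpr : p * r + (1 - p) = (1 - p) / (1 - q) := by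
      rw [hrdef]; field_simp; ring
    calc ∑ k ∈ (Finset.range (n + 1)).filter (fun (k : ℕ) => q * n ≤ (k : ℝ)),
            (n.choose k : ℝ) * p ^ k * (1 - p) ^ (n - k)
        ≤ ∑ k ∈ (Finset.range (n + 1)).filter (fun (k : ℕ) => q * n ≤ (k : ℝ)),
            (n.choose k : ℝ) * p ^ k * (1 - p) ^ (n - k) * r ^ ((k : ℝ) - q * n) := by
          apply Finset.sum_le_sum
          intro k hk
          have hk2 : q * n ≤ (k : ℝ) := (Finset.mem_filter.mp hk).2
          have hre : (1 : ℝ) ≤ r ^ ((k : ℝ) - q * n) := by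
            calc (1 : ℝ) = r ^ (0 : ℝ) := (Real.rpow_zero r).symm
              _ ≤ r ^ ((k : ℝ) - q * n) :=
                  Real.rpow_le_rpow_of_exponent_le hr1 (by linarith)
          exact le_mul_of_one_le_right (by positivity) hre
      _ ≤ ∑ k ∈ Finset.range (n + 1),
            (n.choose k : ℝ) * p ^ k * (1 - p) ^ (n - k) * r ^ ((k : ℝ) - q * n) :=
          Finset.sum_le_sum_of_subset_of_nonneg (Finset.filter_subset _ _)
            (fun k _ _ => by positivity)
      _ = ∑ k ∈ Finset.range (n + 1),
            ((p * r) ^ k * (1 - p) ^ (n - k) * (n.choose k : ℝ)) * r ^ (-(q * (n : ℝ))) := by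
          apply Finset.sum_congr rfl
          intro k hk
          rw [show (k : ℝ) - q * n = (k : ℝ) + -(q * (n : ℝ)) by ring,
            Real.rpow_add hr0, Real.rpow_natCast, mul_pow]
          ring
      _ = (p * r + (1 - p)) ^ n * r ^ (-(q * (n : ℝ))) := by
          rw [← Finset.sum_mul, ← add_pow]
      _ = Real.exp (-(n : ℝ) * klBernoulli q p) := by
          rw [hpr, show ((1 - p) / (1 - q)) ^ n
              = Real.exp ((n : ℝ) * Real.log ((1 - p) / (1 - q))) by
                rw [Real.exp_nat_mul, Real.exp_log (div_pos h1p h1q)],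
            Real.rpow_def_of_pos hr0, ← Real.exp_add]
          congr 1
          have hlogr : Real.log (q * (1 - p) / (p * (1 - q)))
              = Real.log q + Real.log (1 - p) - (Real.log p + Real.log (1 - q)) := by
            rw [Real.log_div (by positivity) (by positivity),
              Real.log_mul (ne_of_gt hq0) (ne_of_gt h1p),
              Real.log_mul (ne_of_gt hp0) (ne_of_gt h1q)]
          simp only [klBernoulli, hrdef]
          rw [hlogr, Real.log_div (ne_of_gt hq0) (ne_of_gt hp0),
            Real.log_div (ne_of_gt h1q) (ne_of_gt h1p),
            Real.log_div (ne_of_gt h1p) (ne_of_gt h1q)]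
          ring
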